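/- For all X ∈ G₂ and y, z ∈ G₁: ṽ(X, yz) = φ(X,y,z)⁻³ • ( ṽ(X,y) * β_y( ṽ(X,z) ) ). -/

import Mathlib

/-- **setting of Theorem 8.1.**  With `(β, v, φ, ṽ)` as in Theorem 8.1, for
all `X ∈ G₂` and `y, z ∈ G₁`:
`ṽ(X, yz) = φ(X,y,z)⁻³ • (ṽ(X,y) * β_y(ṽ(X,z)))`. -/
theorem vt_deformed_cocycle_in_second_argument
    {A : Type*} [NormedRing A] [StarRing A] [CStarRing A] [NormedAlgebra ℂ A]
    [CompleteSpace A] [StarModule ℂ A]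
    {G₁ G₂ : Type*} [CommGroup G₁] [CommGroup G₂]
    (β : G₁ × G₂ → (A ≃⋆ₐ[ℂ] A)) (v : G₁ × G₂ → G₁ × G₂ → unitary A)
    (htw : ∀ ξ η (a : A), β ξ (β η a) = (v ξ η : A) * β (ξ * η) a * star ((v ξ η : A)))
    (φ : G₁ × G₂ → G₁ × G₂ → G₁ × G₂ → ℂ)
    (hφabs : ∀ ξ η ζ, ‖φ ξ η ζ‖ = 1)
    (hmul₁ : ∀ ξ ξ' η ζ, φ (ξ * ξ') η ζ = φ ξ η ζ * φ ξ' η ζ)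
    (hmul₂ : ∀ ξ η η' ζ, φ ξ (η * η') ζ = φ ξ η ζ * φ ξ η' ζ)
    (hmul₃ : ∀ ξ η ζ ζ', φ ξ η (ζ * ζ') = φ ξ η ζ * φ ξ η ζ')
    (hswap₁₂ : ∀ ξ η ζ, φ η ξ ζ = (φ ξ η ζ)⁻¹)
    (hswap₂₃ : ∀ ξ η ζ, φ ξ ζ η = (φ ξ η ζ)⁻¹)
    (hcoc : ∀ ξ η ζ, (v ξ η : A) * (v (ξ * η) ζ : A)
      = φ ξ η ζ • (β ξ ((v η ζ : A)) * (v ξ (η * ζ) : A)))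
    (hv₁ : ∀ x y : G₁, v (x, 1) (y, 1) = 1)
    (hv₂ : ∀ X Y : G₂, v ((1 : G₁), X) (1, Y) = 1)
    (hφG₁ : ∀ x y z : G₁, φ (x, 1) (y, 1) (z, 1) = 1)
    (hφG₂ : ∀ (ξ : G₁ × G₂) (X Y : G₂),
      φ ξ ((1 : G₁), X) (1, Y) = 1 ∧ φ ((1 : G₁), X) ξ (1, Y) = 1 ∧
        φ ((1 : G₁), X) ((1 : G₁), Y) ξ = 1)
    (vt : G₁ × G₂ → G₁ × G₂ → A)
    (hvt : ∀ ξ η, vt ξ η = (v ξ η : A) * star ((v η ξ : A))) :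
    ∀ (X : G₂) (y z : G₁),
      vt ((1 : G₁), X) (y * z, 1)
        = (φ ((1 : G₁), X) (y, 1) (z, 1)) ^ (-3 : ℤ) •
            (vt ((1 : G₁), X) (y, 1) * β (y, 1) (vt ((1 : G₁), X) (z, 1))) := by
  intro X y z
  set Xe : G₁ × G₂ := ((1:G₁), X) with hXe
  set ye : G₁ × G₂ := (y, (1:G₂)) with hye
  set ze : G₁ × G₂ := (z, (1:G₂)) with hze
  set φ0 : ℂ := φ Xe ye ze with hφ0def
  have habs : ‖φ0‖ = 1 := by rw [hφ0def]; exact hφabs Xe ye ze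
  have hφne : φ0 ≠ 0 := fun h => by simp [h] at habs
  have hconj : star φ0 = φ0⁻¹ := by
    rw [Complex.star_def, ← RCLike.inv_eq_conj]
    exact habs
  have hp1 : φ ye Xe ze = φ0⁻¹ := by rw [hswap₁₂]
  have hp2 : φ ye ze Xe = φ0 := by rw [hswap₂₃, hp1, inv_inv]
  -- abbreviations
  set a : A := (v Xe ye : A) with ha
  set b : A := (v ye Xe : A) with hb
  set c : A := (v Xe ze : A) with hc
  set d : A := (v ze Xe : A) with hd
  set p : A := (v ye (Xe * ze) : A) with hp
  set q : A := (v (ye * Xe) ze : A) with hq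
  have hvyz : (v ye ze : A) = 1 := by rw [hye, hze, hv₁]; rfl
  have hyzprod : ye * ze = (y * z, (1:G₂)) := by
    rw [hye, hze, Prod.mk_mul_mk, mul_one]
  -- (1) v(X, yz)
  have hA : (v Xe (ye * ze) : A) = φ0⁻¹ • (a * q) := by
    have h := hcoc Xe ye ze
    rw [hvyz, map_one, one_mul, mul_comm Xe ye, ← ha, ← hq, ← hφ0def] at h
    rw [h, inv_smul_smul₀ hφne]
  -- (2) from cocycle (y, X, z)
  have hC : b * q = φ0⁻¹ • (β ye c * p) := by
    have h := hcoc ye Xe ze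
    rw [hp1, ← hb, ← hq, ← hc, ← hp] at h
    exact h
  have hqp : q * star p = φ0⁻¹ • (star b * β ye c) := by
    have hq' : q = star b * (φ0⁻¹ • (β ye c * p)) := by
      rw [← hC, ← mul_assoc, hb, Unitary.coe_star_mul_self, one_mul]
    have hpp : p * star p = 1 := Unitary.mul_star_self_of_mem (v ye (Xe * ze)).prop
    rw [hq', mul_assoc, smul_mul_assoc, mul_assoc, hpp, mul_one, mul_smul_comm]
  -- (3) from cocycle (y, z, X)
  have hB : (v (ye * ze) Xe : A) = φ0 • (β ye d * p) := by
    have h := hcoc ye ze Xe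
    rw [hvyz, one_mul, hp2, ← hd, mul_comm ze Xe, ← hp] at h
    exact h
  have key : vt Xe (ye * ze)
      = (φ0⁻¹ * φ0⁻¹ * φ0⁻¹) • ((a * star b) * β ye (c * star d)) := by
    rw [hvt, hA, hB, star_smul, hconj, smul_mul_smul_comm, star_mul,
      mul_assoc a q, ← mul_assoc q, hqp, smul_mul_assoc, mul_smul_comm, smul_smul]
    congr 1
    simp only [map_mul, map_star, mul_assoc]
  have hpow : φ0 ^ (-3 : ℤ) = φ0⁻¹ * φ0⁻¹ * φ0⁻¹ := by
    rw [zpow_neg, show ((3:ℤ)) = ((3:ℕ):ℤ) from rfl, zpow_natCast,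
      pow_succ, pow_succ, pow_one, mul_inv, mul_inv]
  rw [← hyzprod, key, hvt Xe ye, hvt Xe ze, hpow, ← ha, ← hb, ← hc, ← hd]
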